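/- For each μ > 0, the function f(x) = log(√96·μ / (√96·μ² + |x|²)) on ℝ⁴ satisfies the equation Δ²f = e^{4f} on all of ℝ⁴. -/

import Mathlib

open Real MeasureTheory Metric Filter

abbrev E4 := EuclideanSpace ℝ (Fin 4)

noncomputable def lap (u : E4 → ℝ) (x : E4) : ℝ :=
  -∑ i : Fin 4, fderiv ℝ (fun y => fderiv ℝ u y (EuclideanSpace.single i 1)) x (EuclideanSpace.single i 1)

noncomputable def biLap (u : E4 → ℝ) : E4 → ℝ := lap (lap u)

lemma normsq_fderiv (y : E4) : HasFDerivAt (fun z : E4 => ‖z‖^2) (2 • (innerSL ℝ y)) y := by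
  simpa using (hasFDerivAt_id y).norm_sq

lemma sum_sq_eq (x : E4) : ∑ i : Fin 4, (x i)^2 = ‖x‖^2 := by
  rw [EuclideanSpace.norm_eq, Real.sq_sqrt (by positivity)]
  simp [Real.norm_eq_abs, sq_abs]

lemma radial_fderiv_apply (g g' : ℝ → ℝ)
    (hg : ∀ t : ℝ, 0 ≤ t → HasDerivAt g (g' t) t) (y : E4) (i : Fin 4) :
    fderiv ℝ (fun z : E4 => g (‖z‖^2)) y (EuclideanSpace.single i 1)
      = 2 * y i * g' (‖y‖^2) := by
  have h : HasFDerivAt (fun z : E4 => g (‖z‖^2)) (g' (‖y‖^2) • (2 • (innerSL ℝ y))) y :=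
    (hg _ (by positivity)).comp_hasFDerivAt y (normsq_fderiv y)
  rw [h.fderiv]
  simp [EuclideanSpace.inner_single_right]
  ring

lemma lap_radial (g g' g'' : ℝ → ℝ)
    (hg : ∀ t : ℝ, 0 ≤ t → HasDerivAt g (g' t) t)
    (hg' : ∀ t : ℝ, 0 ≤ t → HasDerivAt g' (g'' t) t) (x : E4) :
    lap (fun z : E4 => g (‖z‖^2)) x
      = -(8 * g' (‖x‖^2) + 4 * ‖x‖^2 * g'' (‖x‖^2)) := by
  unfold lap
  have key : ∀ i : Fin 4,
      fderiv ℝ (fun y : E4 => fderiv ℝ (fun z : E4 => g (‖z‖^2)) y (EuclideanSpace.single i 1)) x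
        (EuclideanSpace.single i 1)
      = 2 * g' (‖x‖^2) + 4 * (x i)^2 * g'' (‖x‖^2) := by
    intro i
    have hrw : (fun y : E4 => fderiv ℝ (fun z : E4 => g (‖z‖^2)) y (EuclideanSpace.single i 1))
        = (fun y : E4 => 2 * y i * g' (‖y‖^2)) := by
      funext y; exact radial_fderiv_apply g g' hg y i
    rw [hrw]
    have hprod : HasFDerivAt (fun y : E4 => (y i) * g' (‖y‖^2))
        ((x i) • (g'' (‖x‖^2) • (2 • (innerSL ℝ x)))
          + g' (‖x‖^2) • (EuclideanSpace.proj i : E4 →L[ℝ] ℝ)) x :=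
      ((EuclideanSpace.proj i : E4 →L[ℝ] ℝ).hasFDerivAt).mul
        ((hg' _ (by positivity)).comp_hasFDerivAt x (normsq_fderiv x))
    have h2 := hprod.const_mul (2:ℝ)
    have h3 : (fun y : E4 => 2 * y i * g' (‖y‖^2))
        = (fun y : E4 => 2 * ((y i) * g' (‖y‖^2))) := by funext y; ring
    rw [h3, h2.fderiv]
    simp [EuclideanSpace.inner_single_right, EuclideanSpace.single_apply]
    ring
  simp only [key]
  rw [Finset.sum_add_distrib, Finset.sum_const]
  have h4 : ∑ i : Fin 4, 4 * (x i)^2 * g'' (‖x‖^2)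
      = 4 * ‖x‖^2 * g'' (‖x‖^2) := by
    rw [← Finset.sum_mul, ← Finset.mul_sum, sum_sq_eq]
  rw [h4]
  simp
  ring

theorem stmt1 (μ : ℝ) (hμ : 0 < μ) :
    ∀ x : E4,
      biLap (fun y => Real.log (Real.sqrt 96 * μ / (Real.sqrt 96 * μ ^ 2 + ‖y‖ ^ 2))) x
        = Real.exp (4 * Real.log (Real.sqrt 96 * μ / (Real.sqrt 96 * μ ^ 2 + ‖x‖ ^ 2))) := by
  intro x
  have h96 : (0:ℝ) < Real.sqrt 96 := Real.sqrt_pos.mpr (by norm_num)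
  set a : ℝ := Real.sqrt 96 * μ ^ 2 with ha_def
  set c : ℝ := Real.sqrt 96 * μ with hc_def
  have ha : 0 < a := by positivity
  have hc : 0 < c := by positivity
  have hat : ∀ t : ℝ, 0 ≤ t → 0 < a + t := fun t ht => by linarith
  -- first radial function
  have hg1 : ∀ t : ℝ, 0 ≤ t →
      HasDerivAt (fun t => Real.log (c / (a + t))) (-1 / (a + t)) t := by
    intro t ht
    have h0 := hat t ht
    have h1 : HasDerivAt (fun t : ℝ => c / (a + t)) (-c / (a + t)^2) t := by
      have := (hasDerivAt_const t c).fun_div ((hasDerivAt_id t).const_add a) h0.ne'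
      refine this.congr_deriv ?_
      simp only [id]
      field_simp
      ring
    have h2 := h1.log (by positivity : c / (a + t) ≠ 0)
    convert h2 using 1
    field_simp
  have hg1' : ∀ t : ℝ, 0 ≤ t →
      HasDerivAt (fun t : ℝ => -1 / (a + t)) (1 / (a + t)^2) t := by
    intro t ht
    have h0 := hat t ht
    have := (hasDerivAt_const t (-1:ℝ)).fun_div ((hasDerivAt_id t).const_add a) h0.ne'
    refine this.congr_deriv ?_
    simp only [id]
    field_simp
    ring
  -- the laplacian of f
  have hlap : lap (fun y => Real.log (c / (a + ‖y‖ ^ 2)))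
      = fun z : E4 => (8 * a + 4 * ‖z‖^2) / (a + ‖z‖^2)^2 := by
    funext z
    have h0 := hat (‖z‖^2) (by positivity)
    have := lap_radial _ _ _ hg1 hg1' z
    refine this.trans ?_
    field_simp
    ring
  -- second radial function
  have hg2 : ∀ t : ℝ, 0 ≤ t →
      HasDerivAt (fun t : ℝ => (8 * a + 4 * t) / (a + t)^2) ((-12*a - 4*t) / (a + t)^3) t := by
    intro t ht
    have h0 := hat t ht
    have hnum : HasDerivAt (fun t : ℝ => 8 * a + 4 * t) 4 t := by
      simpa using ((hasDerivAt_id t).const_mul (4:ℝ)).const_add (8*a)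
    have hden : HasDerivAt (fun t : ℝ => (a + t)^2) (2 * (a + t)) t := by
      have := ((hasDerivAt_id t).const_add a).fun_pow 2
      simpa using this
    have := hnum.fun_div hden (by positivity)
    refine this.congr_deriv ?_
    field_simp
    ring
  have hg2' : ∀ t : ℝ, 0 ≤ t →
      HasDerivAt (fun t : ℝ => (-12*a - 4*t) / (a + t)^3) ((32*a + 8*t) / (a + t)^4) t := by
    intro t ht
    have h0 := hat t ht
    have hnum : HasDerivAt (fun t : ℝ => -12 * a - 4 * t) (-4) t := by
      simpa using ((hasDerivAt_id t).const_mul (4:ℝ)).const_sub (-12*a)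
    have hden : HasDerivAt (fun t : ℝ => (a + t)^3) (3 * (a + t)^2) t := by
      have := ((hasDerivAt_id t).const_add a).fun_pow 3
      simpa using this
    have := hnum.fun_div hden (by positivity)
    refine this.congr_deriv ?_
    field_simp
    ring
  -- assemble
  have h0 := hat (‖x‖^2) (by positivity)
  have hbil : biLap (fun y => Real.log (c / (a + ‖y‖ ^ 2))) x
      = 96 * a^2 / (a + ‖x‖^2)^4 := by
    unfold biLap
    rw [hlap]
    have := lap_radial _ _ _ hg2 hg2' x
    refine this.trans ?_
    field_simp
    ring
  rw [hbil]
  -- right hand side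
  have hr : 0 < c / (a + ‖x‖^2) := by positivity
  have hlog : (4:ℝ) * Real.log (c / (a + ‖x‖^2)) = Real.log ((c / (a + ‖x‖^2))^4) := by
    rw [Real.log_pow]; norm_num
  rw [hlog, Real.exp_log (by positivity)]
  rw [div_pow]
  have hsq : Real.sqrt 96 ^ 2 = 96 := Real.sq_sqrt (by norm_num)
  congr 1
  have : c^4 = (Real.sqrt 96 ^ 2)^2 * μ^4 := by rw [hc_def]; ring
  rw [this, hsq, ha_def]
  nlinarith [hsq]
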